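/- Let $\hat\theta$ be the isometric involution on $L^2((0,\infty))$ given by $(\hat\theta f)(t) = \int_0^{1/t} f(s)\,ds - \frac{1}{t} f(1/t)$. Then for every $f \in L^2((0,1))$ (extended by zero), $\langle f, \hat\theta f\rangle = \left|\int_0^1 f(x)\,dx\right|^2$; in particular $\langle f, \hat\theta f\rangle \geq 0$ on this subspace. -/

import Mathlib

open MeasureTheory

theorem stmt18 (f : ℝ → ℝ)
    (hf : MeasureTheory.MemLp f 2 (volume.restrict (Set.Ioi (0 : ℝ))))
    (hsupp : ∀ x : ℝ, 1 < x → f x = 0) :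
    (∫ t in Set.Ioi (0 : ℝ),
        f t * ((∫ s in Set.Ioc (0 : ℝ) t⁻¹, f s) - t⁻¹ * f t⁻¹))
      = (∫ x in Set.Ioc (0 : ℝ) 1, f x) ^ 2 ∧
    0 ≤ ∫ t in Set.Ioi (0 : ℝ),
        f t * ((∫ s in Set.Ioc (0 : ℝ) t⁻¹, f s) - t⁻¹ * f t⁻¹) := by
  set I : ℝ := ∫ x in Set.Ioc (0 : ℝ) 1, f x with hI
  have key : (∫ t in Set.Ioi (0 : ℝ),
      f t * ((∫ s in Set.Ioc (0 : ℝ) t⁻¹, f s) - t⁻¹ * f t⁻¹)) = I ^ 2 := by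
    have hae : ∀ᵐ t : ℝ ∂volume, t ∈ Set.Ioi (0:ℝ) →
        f t * ((∫ s in Set.Ioc (0 : ℝ) t⁻¹, f s) - t⁻¹ * f t⁻¹)
          = I * (Set.Ioc (0:ℝ) 1).indicator f t := by
      have h1 : ∀ᵐ t : ℝ ∂volume, t ≠ 1 := by
        have : volume ({1} : Set ℝ) = 0 := measure_singleton 1
        exact (MeasureTheory.ae_iff.2 (by simp [this]))
      filter_upwards [h1] with t ht1 htpos
      have htpos : (0:ℝ) < t := htpos
      rcases lt_or_gt_of_ne ht1 with hlt | hgt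
      · -- 0 < t < 1
        have hinv : (1:ℝ) < t⁻¹ := (one_lt_inv₀ htpos).2 hlt
        have hf1 : f t⁻¹ = 0 := hsupp _ hinv
        have hind : (Set.Ioc (0:ℝ) 1).indicator f t = f t :=
          Set.indicator_of_mem (Set.mem_Ioc.2 ⟨htpos, hlt.le⟩) f
        have hint : (∫ s in Set.Ioc (0:ℝ) t⁻¹, f s) = I := by
          have h2 : (∫ s in Set.Ioc (0:ℝ) t⁻¹, f s)
              = ∫ s in Set.Ioc (0:ℝ) t⁻¹, (Set.Ioc (0:ℝ) 1).indicator f s := by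
            refine setIntegral_congr_fun measurableSet_Ioc (fun x hx => ?_)
            by_cases hx1 : x ≤ 1
            · exact (Set.indicator_of_mem (Set.mem_Ioc.2 ⟨hx.1, hx1⟩) f).symm
            · rw [Set.indicator_of_notMem (fun h => hx1 h.2), hsupp x (not_le.1 hx1)]
          rw [h2, setIntegral_indicator measurableSet_Ioc,
            Set.Ioc_inter_Ioc, max_self, min_eq_right hinv.le]
        rw [hint, hf1, hind]
        ring
      · -- t > 1
        have hft : f t = 0 := hsupp t hgt
        have hind : (Set.Ioc (0:ℝ) 1).indicator f t = 0 :=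
          Set.indicator_of_notMem (fun h => absurd h.2 (not_le.2 hgt)) f
        rw [hft, hind]; ring
    rw [setIntegral_congr_ae measurableSet_Ioi hae, MeasureTheory.integral_const_mul]
    have : (∫ t in Set.Ioi (0:ℝ), (Set.Ioc (0:ℝ) 1).indicator f t) = I := by
      rw [setIntegral_indicator measurableSet_Ioc,
        Set.inter_eq_right.2 (Set.Ioc_subset_Ioi_self)]
    rw [this, sq]
  exact ⟨key, key ▸ sq_nonneg I⟩
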